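/- For the Cherry Hamiltonian H(q₁,q₂,p₁,p₂) = (1/2)(q₁² + p₁²) - (q₂² + p₂²) + (1/2)p₂(p₁² - q₁²) - q₁q₂p₁, the explicit family of curves q₁(t) = √2·cos(t)/(t-τ), q₂(t) = cos(2t)/(t-τ), p₁(t) = -√2·sin(t)/(t-τ), p₂(t) = sin(2t)/(t-τ), defined for t < τ, satisfies Hamilton's equations q̇ᵢ = ∂H/∂pᵢ, ṗᵢ = -∂H/∂qᵢ. -/

import Mathlib

/-- The Cherry Hamiltonian
`H(q₁,q₂,p₁,p₂) = ½(q₁² + p₁²) - (q₂² + p₂²) + ½p₂(p₁² - q₁²) - q₁q₂p₁`. -/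
noncomputable def cherryH (q1 q2 p1 p2 : ℝ) : ℝ :=
  (1 / 2) * (q1 ^ 2 + p1 ^ 2) - (q2 ^ 2 + p2 ^ 2)
    + (1 / 2) * p2 * (p1 ^ 2 - q1 ^ 2) - q1 * q2 * p1

/-- The explicit family of curves
`q₁(t) = √2 cos t/(t-τ)`, `q₂(t) = cos 2t/(t-τ)`, `p₁(t) = -√2 sin t/(t-τ)`,
`p₂(t) = sin 2t/(t-τ)` satisfies Hamilton's equations `q̇ᵢ = ∂H/∂pᵢ`, `ṗᵢ = -∂H/∂qᵢ`
for the Cherry Hamiltonian, for all `t < τ`. -/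
theorem cherry_explicit_solution (τ : ℝ)
    (q1 q2 p1 p2 : ℝ → ℝ)
    (hq1 : q1 = fun t => Real.sqrt 2 * Real.cos t / (t - τ))
    (hq2 : q2 = fun t => Real.cos (2 * t) / (t - τ))
    (hp1 : p1 = fun t => -(Real.sqrt 2 * Real.sin t) / (t - τ))
    (hp2 : p2 = fun t => Real.sin (2 * t) / (t - τ)) :
    ∀ t : ℝ, t < τ →
      HasDerivAt q1 (deriv (fun x => cherryH (q1 t) (q2 t) x (p2 t)) (p1 t)) t ∧
      HasDerivAt q2 (deriv (fun x => cherryH (q1 t) (q2 t) (p1 t) x) (p2 t)) t ∧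
      HasDerivAt p1 (-(deriv (fun x => cherryH x (q2 t) (p1 t) (p2 t)) (q1 t))) t ∧
      HasDerivAt p2 (-(deriv (fun x => cherryH (q1 t) x (p1 t) (p2 t)) (q2 t))) t := by
  intro t ht
  have hs : t - τ ≠ 0 := sub_ne_zero.mpr (ne_of_lt ht)
  subst hq1 hq2 hp1 hp2
  set r := Real.sqrt 2 with hr
  have hr2 : r ^ 2 = 2 := Real.sq_sqrt (by norm_num)
  have hpy : Real.sin t ^ 2 = 1 - Real.cos t ^ 2 := Real.sin_sq t
  have hden : HasDerivAt (fun t : ℝ => t - τ) 1 t := (hasDerivAt_id t).sub_const τ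
  have h2t : HasDerivAt (fun t : ℝ => 2 * t) 2 t := by
    simpa using (hasDerivAt_id t).const_mul (2:ℝ)
  -- curve derivatives
  have hq1' : HasDerivAt (fun t => r * Real.cos t / (t - τ))
      ((r * -Real.sin t * (t - τ) - r * Real.cos t * 1) / (t - τ) ^ 2) t :=
    ((Real.hasDerivAt_cos t).const_mul r).div hden hs
  have hq2' : HasDerivAt (fun t => Real.cos (2 * t) / (t - τ))
      ((-Real.sin (2 * t) * 2 * (t - τ) - Real.cos (2 * t) * 1) / (t - τ) ^ 2) t :=
    (((Real.hasDerivAt_cos (2 * t)).comp t h2t).div hden hs)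
  have hp1' : HasDerivAt (fun t => -(r * Real.sin t) / (t - τ))
      ((-(r * Real.cos t) * (t - τ) - -(r * Real.sin t) * 1) / (t - τ) ^ 2) t :=
    (((Real.hasDerivAt_sin t).const_mul r).neg).div hden hs
  have hp2' : HasDerivAt (fun t => Real.sin (2 * t) / (t - τ))
      ((Real.cos (2 * t) * 2 * (t - τ) - Real.sin (2 * t) * 1) / (t - τ) ^ 2) t :=
    (((Real.hasDerivAt_sin (2 * t)).comp t h2t).div hden hs)
  -- abbreviations for point values
  set A := r * Real.cos t / (t - τ) with hA
  set B := Real.cos (2 * t) / (t - τ) with hB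
  set C := -(r * Real.sin t) / (t - τ) with hC
  set D := Real.sin (2 * t) / (t - τ) with hD
  -- partial derivatives of H
  have hH1 : HasDerivAt (fun x => cherryH A B x D)
      ((1/2) * (2 * C ^ 1) + (1/2) * D * (2 * C ^ 1) - A * B * 1) C :=
    ((((hasDerivAt_pow 2 C).const_add (A ^ 2)).const_mul (1/2)).sub_const
        (B ^ 2 + D ^ 2)).add
      (((hasDerivAt_pow 2 C).sub_const (A ^ 2)).const_mul ((1/2) * D)) |>.sub
      ((hasDerivAt_id' C).const_mul (A * B))
  have hH2 : HasDerivAt (fun x => cherryH A B C x)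
      (-(2 * D ^ 1) + ((1/2) * 1 * (C ^ 2 - A ^ 2))) D :=
    ((((hasDerivAt_pow 2 D).const_add (B ^ 2)).const_sub ((1/2) * (A ^ 2 + C ^ 2))).add
      (((hasDerivAt_id' D).const_mul (1/2)).mul_const (C ^ 2 - A ^ 2))).sub_const (A * B * C)
  have hH3 : HasDerivAt (fun x => cherryH x B C D)
      ((1/2) * (2 * A ^ 1) + (1/2) * D * (-(2 * A ^ 1)) - 1 * B * C) A :=
    ((((hasDerivAt_pow 2 A).add_const (C ^ 2)).const_mul (1/2)).sub_const
        (B ^ 2 + D ^ 2)).add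
      (((hasDerivAt_pow 2 A).const_sub (C ^ 2)).const_mul ((1/2) * D)) |>.sub
      (((hasDerivAt_id' A).mul_const B).mul_const C)
  have hH4 : HasDerivAt (fun x => cherryH A x C D)
      (-(2 * B ^ 1) - A * 1 * C) B :=
    ((((hasDerivAt_pow 2 B).add_const (D ^ 2)).const_sub ((1/2) * (A ^ 2 + C ^ 2))).add_const
      ((1/2) * D * (C ^ 2 - A ^ 2))).sub (((hasDerivAt_id' B).const_mul A).mul_const C)
  set s := t - τ with hsdef
  clear_value s
  refine ⟨?_, ?_, ?_, ?_⟩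
  · rw [hH1.deriv]
    convert hq1' using 1
    simp only [hA, hB, hC, hD, Real.cos_two_mul, Real.sin_two_mul]
    field_simp
    ring_nf
    linear_combination (-2 * r * Real.cos t) * hpy
  · rw [hH2.deriv]
    convert hq2' using 1
    simp only [hA, hB, hC, hD, Real.cos_two_mul, Real.sin_two_mul]
    field_simp
    ring_nf
    linear_combination (Real.sin t ^ 2 - Real.cos t ^ 2) * hr2 + 2 * hpy
  · rw [hH3.deriv]
    convert hp1' using 1
    simp only [hA, hB, hC, hD, Real.cos_two_mul, Real.sin_two_mul]
    field_simp
    ring_nf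
  · rw [hH4.deriv]
    convert hp2' using 1
    simp only [hA, hB, hC, hD, Real.cos_two_mul, Real.sin_two_mul]
    field_simp
    ring_nf
    linear_combination (-(Real.cos t * Real.sin t)) * hr2
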